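/- Every strongly connected tournament on at least 3 vertices contains a directed Hamilton cycle. -/

import Mathlib

namespace CamionAux

variable {V : Type*}

def IsCyc (E : V → V → Prop) (l : List V) : Prop :=
  l.Nodup ∧ 3 ≤ l.length ∧
    ∀ i, (h : i < l.length) →
      E (l[i]'h) (l[(i + 1) % l.length]'(Nat.mod_lt _ (by omega)))

theorem IsCyc.rotate {E : V → V → Prop} {l : List V} (hl : IsCyc E l) (n : ℕ) :
    IsCyc E (l.rotate n) := by
  obtain ⟨hnd, hlen, hcyc⟩ := hl
  refine ⟨List.nodup_rotate.2 hnd, by simpa using hlen, ?_⟩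
  intro i h
  have hm : l.length = (l.rotate n).length := (List.length_rotate l n).symm
  have h1 : (l.rotate n)[i]'h = l.get ⟨(i + n) % l.length, by
      exact Nat.mod_lt _ (by omega)⟩ := by
    simpa using List.get_rotate l n ⟨i, h⟩
  have h2 : (l.rotate n)[(i + 1) % (l.rotate n).length]'(Nat.mod_lt _ (by omega)) =
      l.get ⟨((i + 1) % l.length + n) % l.length, Nat.mod_lt _ (by omega)⟩ := by
    have := List.get_rotate l n ⟨(i + 1) % (l.rotate n).length, Nat.mod_lt _ (by omega)⟩
    simpa [← hm] using this
  rw [h1, h2]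
  have key : ((i + 1) % l.length + n) % l.length = ((i + n) % l.length + 1) % l.length := by
    rw [Nat.mod_add_mod, Nat.mod_add_mod]
    ring_nf
  have := hcyc ((i + n) % l.length) (Nat.mod_lt _ (by omega))
  simp only [List.get_eq_getElem]
  have e2 : l[((i + 1) % l.length + n) % l.length]'(Nat.mod_lt _ (by omega)) =
      l[((i + n) % l.length + 1) % l.length]'(Nat.mod_lt _ (by omega)) :=
    getElem_congr_idx key
  rw [e2]
  exact this

end CamionAux

namespace CamionAux

theorem cyc_append {E : V → V → Prop} {l : List V} (hl : IsCyc E l) (p : List V)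
    (hp : 0 < p.length) (hnd : (l ++ p).Nodup) (hchain : p.Chain' E)
    (h1 : E (l[l.length - 1]'(by have := hl.2.1; omega)) (p[0]'hp))
    (h2 : E (p[p.length - 1]'(by omega)) (l[0]'(by have := hl.2.1; omega))) :
    IsCyc E (l ++ p) := by
  obtain ⟨hnd', hlen, hcyc⟩ := hl
  have hlen' : (l ++ p).length = l.length + p.length := List.length_append
  refine ⟨hnd, by omega, ?_⟩
  intro i h
  have hmk : i < l.length + p.length := by omega
  rcases lt_trichotomy (i + 1) l.length with hi | hi | hi
  · -- both in l
    have e1 : (l ++ p)[i]'h = l[i]'(by omega) := List.getElem_append_left (by omega)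
    have emod : (i + 1) % (l ++ p).length = i + 1 := Nat.mod_eq_of_lt (by omega)
    have e2 : (l ++ p)[(i + 1) % (l ++ p).length]'(Nat.mod_lt _ (by omega)) =
        l[i + 1]'hi := by
      rw [getElem_congr_idx emod]; exact List.getElem_append_left hi
    rw [e1, e2]
    have := hcyc i (by omega)
    have emod2 : (i + 1) % l.length = i + 1 := Nat.mod_eq_of_lt hi
    rwa [getElem_congr_idx emod2] at this
  · -- junction l → p
    have e1 : (l ++ p)[i]'h = l[l.length - 1]'(by omega) := by
      rw [getElem_congr_idx (show i = l.length - 1 by omega)]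
      exact List.getElem_append_left (by omega)
    have emod : (i + 1) % (l ++ p).length = l.length := by
      rw [hi]; exact Nat.mod_eq_of_lt (by omega)
    have e2 : (l ++ p)[(i + 1) % (l ++ p).length]'(Nat.mod_lt _ (by omega)) =
        p[0]'hp := by
      rw [getElem_congr_idx emod]
      rw [List.getElem_append_right (le_refl _)]
      exact getElem_congr_idx (by omega)
    rw [e1, e2]; exact h1
  · rcases lt_or_eq_of_le (show i + 1 ≤ l.length + p.length by omega) with hik | hik
    · -- both in p
      have e1 : (l ++ p)[i]'h = p[i - l.length]'(by omega) :=
        List.getElem_append_right (by omega)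
      have emod : (i + 1) % (l ++ p).length = i + 1 := Nat.mod_eq_of_lt (by omega)
      have e2 : (l ++ p)[(i + 1) % (l ++ p).length]'(Nat.mod_lt _ (by omega)) =
          p[i - l.length + 1]'(by omega) := by
        rw [getElem_congr_idx emod]
        rw [List.getElem_append_right (by omega)]
        exact getElem_congr_idx (by omega)
      rw [e1, e2]
      have := List.isChain_iff_getElem.1 hchain (i - l.length) (by omega)
      simpa using this
    · -- junction p → l
      have e1 : (l ++ p)[i]'h = p[p.length - 1]'(by omega) := by
        rw [List.getElem_append_right (by omega)]
        exact getElem_congr_idx (by omega)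
      have emod : (i + 1) % (l ++ p).length = 0 := by
        rw [hlen', hik, Nat.mod_self]
      have e2 : (l ++ p)[(i + 1) % (l ++ p).length]'(Nat.mod_lt _ (by omega)) =
          l[0]'(by omega) := by
        rw [getElem_congr_idx emod]
        exact List.getElem_append_left (by omega)
      rw [e1, e2]; exact h2

end CamionAux

namespace CamionAux

variable {E : V → V → Prop}

theorem flipE (_hirr : ∀ v, ¬ E v v) (htot : ∀ u v : V, u ≠ v → (E u v ↔ ¬ E v u))
    {u v : V} (hne : u ≠ v) (h : ¬ E u v) : E v u := (htot v u hne.symm).2 h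

theorem neE (hirr : ∀ v, ¬ E v v) {u v : V} (h : E u v) : u ≠ v :=
  fun he => hirr v (he ▸ h)

theorem dich (hirr : ∀ v, ¬ E v v) (htot : ∀ u v : V, u ≠ v → (E u v ↔ ¬ E v u))
    {l : List V} (hl : IsCyc E l) {v : V} (hv : v ∉ l)
    (hni : ∀ i, (h : i < l.length) →
      ¬ (E (l[i]'h) v ∧ E v (l[(i + 1) % l.length]'(Nat.mod_lt _ (by omega))))) :
    (∀ x ∈ l, E x v) ∨ (∀ x ∈ l, E v x) := by
  obtain ⟨hnd, hlen, hcyc⟩ := hl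
  have step : ∀ j, (h : j < l.length) → E (l[j]'h) v →
      E (l[(j + 1) % l.length]'(Nat.mod_lt _ (by omega))) v := by
    intro j h hj
    have h2 : ¬ E v (l[(j + 1) % l.length]'(Nat.mod_lt _ (by omega))) :=
      fun hc => hni j h ⟨hj, hc⟩
    exact flipE hirr htot (fun he => hv (he ▸ List.getElem_mem _)) h2
  have prop : ∀ j, (h : j < l.length) → E (l[j]'h) v → ∀ d,
      E (l[(j + d) % l.length]'(Nat.mod_lt _ (by omega))) v := by
    intro j h hj d
    induction d with
    | zero =>
      rw [getElem_congr_idx (show (j + 0) % l.length = j by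
        simp [Nat.mod_eq_of_lt h])]
      exact hj
    | succ d ih =>
      have := step ((j + d) % l.length) (Nat.mod_lt _ (by omega)) ih
      rwa [getElem_congr_idx (show ((j + d) % l.length + 1) % l.length
          = (j + (d + 1)) % l.length by rw [Nat.mod_add_mod]; ring_nf)] at this
  by_cases hex : ∃ j, ∃ h : j < l.length, E (l[j]'h) v
  · left
    intro x hx
    obtain ⟨k, hk, hek⟩ := List.getElem_of_mem hx
    obtain ⟨j, h, hj⟩ := hex
    have := prop j h hj (k + l.length - j)
    rwa [getElem_congr_idx (show (j + (k + l.length - j)) % l.length = k by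
      have e : j + (k + l.length - j) = k + l.length := by omega
      rw [e, Nat.add_mod_right, Nat.mod_eq_of_lt hk]), hek] at this
  · right
    push_neg at hex
    intro x hx
    obtain ⟨k, hk, hek⟩ := List.getElem_of_mem hx
    rw [← hek]
    exact flipE hirr htot (fun he => hv (he ▸ List.getElem_mem _)) (hex k hk)

theorem exists_triangle (hirr : ∀ v, ¬ E v v)
    (htot : ∀ u v : V, u ≠ v → (E u v ↔ ¬ E v u))
    (hstrong : ∀ u v : V, Relation.ReflTransGen E u v)
    {u v : V} (hne : u ≠ v) (huv : E u v) : ∃ l : List V, IsCyc E l := by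
  by_cases hex : ∃ x y z : V, E x y ∧ E y z ∧ E z x
  · obtain ⟨x, y, z, hxy, hyz, hzx⟩ := hex
    refine ⟨[x, y, z], ?_, by simp, ?_⟩
    · simp only [List.nodup_cons, List.mem_cons, List.mem_singleton, List.not_mem_nil,
        or_false, List.nodup_nil, and_true, List.nodup_cons]
      exact ⟨by push_neg; exact ⟨neE hirr hxy, (neE hirr hzx).symm⟩, by simpa using neE hirr hyz⟩
    · intro i h
      simp only [List.length_cons, List.length_nil] at h ⊢
      interval_cases i <;> simpa using (by assumption)
  · push_neg at hex
    have claim : ∀ w, Relation.ReflTransGen E v w → w = v ∨ E u w := by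
      intro w hw
      induction hw with
      | refl => left; rfl
      | tail hb e ih =>
        rename_i b c
        rcases ih with heq | hub
        · rw [heq] at e
          by_cases hcv : c = v
          · left; exact hcv
          · have hcu : c ≠ u := by
              intro heq; rw [heq] at e
              exact (htot u v hne).1 huv e
            right
            exact flipE hirr htot hcu (fun h' => hex u v c huv e h')
        · by_cases hcv : c = v
          · left; exact hcv
          · have hcu : c ≠ u := by
              intro heq; rw [heq] at e
              exact (htot u b (neE hirr hub)).1 hub e
            right
            exact flipE hirr htot hcu (fun h' => hex u b c hub e h')
    rcases claim u (hstrong v u) with h | h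
    · exact absurd h hne
    · exact absurd h (hirr u)

end CamionAux

namespace CamionAux

variable {E : V → V → Prop}

theorem extend (hirr : ∀ v, ¬ E v v) (htot : ∀ u v : V, u ≠ v → (E u v ↔ ¬ E v u))
    (hstrong : ∀ u v : V, Relation.ReflTransGen E u v)
    {l : List V} (hl : IsCyc E l) {v : V} (hv : v ∉ l) :
    ∃ l', IsCyc E l' ∧ l.length < l'.length := by
  have hlen3 := hl.2.1
  by_cases hins : ∃ u, u ∉ l ∧ ∃ i, ∃ h : i < l.length,
      E (l[i]'h) u ∧ E u (l[(i + 1) % l.length]'(Nat.mod_lt _ (by omega)))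
  · obtain ⟨u, hu, i, hi, h1, h2⟩ := hins
    have hrot := hl.rotate ((i + 1) % l.length)
    set r := l.rotate ((i + 1) % l.length) with hr
    have hrl : r.length = l.length := by simp [hr]
    have hur : u ∉ r := by simpa [hr, List.mem_rotate] using hu
    have e1 : r[r.length - 1]'(by have := hrot.2.1; omega) = l[i]'hi := by
      have := List.get_rotate l ((i + 1) % l.length) ⟨r.length - 1, by rw [← hr]; omega⟩
      simp only [List.get_eq_getElem] at this
      rw [this]
      apply getElem_congr_idx
      rw [Nat.add_mod_mod, hrl]
      rw [show l.length - 1 + (i + 1) = l.length + i by omega]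
      rw [Nat.add_mod_left, Nat.mod_eq_of_lt hi]
    have e2 : r[0]'(by have := hrot.2.1; omega) =
        l[(i + 1) % l.length]'(Nat.mod_lt _ (by omega)) := by
      have := List.get_rotate l ((i + 1) % l.length) ⟨0, by rw [← hr]; omega⟩
      simp only [List.get_eq_getElem] at this
      rw [this]
      apply getElem_congr_idx
      rw [Nat.zero_add]
      exact Nat.mod_mod_of_dvd _ dvd_rfl
    refine ⟨r ++ [u], cyc_append hrot [u] (by simp) ?_ (List.isChain_singleton _) ?_ ?_, by simp; omega⟩
    · simp only [List.nodup_append, List.nodup_singleton, true_and]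
      exact ⟨hrot.1, by simpa using fun a (ha : a ∈ r) (h : a = u) => hur (h ▸ ha)⟩
    · simpa [e1] using h1
    · simpa [e2] using h2
  · push_neg at hins
    have hdich : ∀ u, u ∉ l → (∀ x ∈ l, E x u) ∨ (∀ x ∈ l, E u x) := by
      intro u hu
      refine dich hirr htot hl hu ?_
      intro i h hc
      exact (hins u hu i h hc.1) hc.2
    have h0 : 0 < l.length := by omega
    have h0l : l[0]'h0 ∈ l := List.getElem_mem _
    have claim1 : ∀ w, Relation.ReflTransGen E (l[0]'h0) w →
        w ∈ l ∨ ∃ a, a ∉ l ∧ ∀ x ∈ l, E x a := by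
      intro w hw
      induction hw with
      | refl => left; exact h0l
      | tail hb e ih =>
        rename_i b c
        rcases ih with hbl | hA
        · by_cases hcl : c ∈ l
          · left; exact hcl
          · rcases hdich c hcl with hc | hc
            · right; exact ⟨c, hcl, hc⟩
            · exact absurd (hc b hbl) ((htot b c (neE hirr e)).1 e)
        · right; exact hA
    obtain ⟨a, hal, haA⟩ := (claim1 v (hstrong _ v)).resolve_left hv
    have claim2 : ∀ w, Relation.ReflTransGen E a w →
        (w ∉ l ∧ ∀ x ∈ l, E x w) ∨
          ∃ a' b', (a' ∉ l ∧ ∀ x ∈ l, E x a') ∧ (b' ∉ l ∧ ∀ x ∈ l, E b' x) ∧ E a' b' := by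
      intro w hw
      induction hw with
      | refl => left; exact ⟨hal, haA⟩
      | tail hb e ih =>
        rename_i b c
        rcases ih with ⟨hbl, hbA⟩ | hdone
        · by_cases hcl : c ∈ l
          · exact absurd (hbA c hcl) ((htot b c (neE hirr e)).1 e)
          · rcases hdich c hcl with hc | hc
            · left; exact ⟨hcl, hc⟩
            · right; exact ⟨b, c, ⟨hbl, hbA⟩, ⟨hcl, hc⟩, e⟩
        · right; exact hdone
    rcases claim2 _ (hstrong a (l[0]'h0)) with ⟨hnl, _⟩ | ⟨a', b', ⟨ha1, ha2⟩, ⟨hb1, hb2⟩, hab⟩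
    · exact absurd h0l hnl
    · refine ⟨l ++ [a', b'], cyc_append hl [a', b'] (by simp) ?_ ?_ ?_ ?_, by simp⟩
      · refine List.Nodup.append hl.1 (by simp [neE hirr hab]) ?_
        intro x hx hx2
        simp only [List.mem_cons, List.mem_singleton, List.not_mem_nil, or_false] at hx2
        rcases hx2 with rfl | rfl
        · exact ha1 hx
        · exact hb1 hx
      · exact List.isChain_pair.2 hab
      · simpa using ha2 _ (List.getElem_mem _)
      · simpa using hb2 _ h0l

end CamionAux



/-- Every strongly connected tournament on at least 3 vertices contains a directed
Hamilton cycle. -/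
theorem stmt1 {V : Type*} [Fintype V] (E : V → V → Prop)
    (htour : (∀ v, ¬ E v v) ∧ ∀ u v : V, u ≠ v → (E u v ↔ ¬ E v u))
    (hcard : 3 ≤ Fintype.card V)
    (hstrong : ∀ u v : V, Relation.ReflTransGen E u v) :
    ∃ c : ZMod (Fintype.card V) → V, Function.Bijective c ∧
      ∀ i : ZMod (Fintype.card V), E (c i) (c (i + 1)) := by
  classical
  obtain ⟨hirr, htot⟩ := htour
  obtain ⟨u, v, huv⟩ := Fintype.exists_pair_of_one_lt_card (by omega : 1 < Fintype.card V)
  have hedge : ∃ a b : V, a ≠ b ∧ E a b := by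
    by_cases h : E u v
    · exact ⟨u, v, huv, h⟩
    · exact ⟨v, u, huv.symm, CamionAux.flipE hirr htot huv h⟩
  obtain ⟨a, b, hab, hEab⟩ := hedge
  obtain ⟨l0, hl0⟩ := CamionAux.exists_triangle hirr htot hstrong hab hEab
  have grow : ∀ k (l : List V), CamionAux.IsCyc E l → Fintype.card V - l.length ≤ k →
      ∃ l', CamionAux.IsCyc E l' ∧ l'.length = Fintype.card V := by
    intro k
    induction k with
    | zero =>
      intro l hl hk
      have h1 : l.length ≤ Fintype.card V := hl.1.length_le_card
      exact ⟨l, hl, by omega⟩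
    | succ k ih =>
      intro l hl hk
      by_cases hall : ∀ w, w ∈ l
      · have h2 : l.toFinset = Finset.univ := Finset.eq_univ_iff_forall.2 (by simpa using hall)
        have h3 : l.toFinset.card = l.length := List.toFinset_card_of_nodup hl.1
        refine ⟨l, hl, ?_⟩
        rw [← h3, h2, Finset.card_univ]
      · push_neg at hall
        obtain ⟨w, hw⟩ := hall
        obtain ⟨l', hl', hlt⟩ := CamionAux.extend hirr htot hstrong hl hw
        exact ih l' hl' (by have := hl'.1.length_le_card; omega)
  obtain ⟨l, hl, hlen⟩ := grow (Fintype.card V) l0 hl0 (by omega)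
  haveI : NeZero (Fintype.card V) := ⟨by omega⟩
  haveI : Fact (1 < Fintype.card V) := ⟨by omega⟩
  refine ⟨fun i => l[(ZMod.val i)]'(by rw [hlen]; exact ZMod.val_lt i), ?_, ?_⟩
  · rw [Fintype.bijective_iff_injective_and_card]
    refine ⟨?_, by rw [ZMod.card]⟩
    intro i j hij
    exact ZMod.val_injective _ ((hl.1.getElem_inj_iff).1 hij)
  · intro i
    have hv : (ZMod.val i) < l.length := by rw [hlen]; exact ZMod.val_lt i
    have h := hl.2.2 (ZMod.val i) hv
    have e : (ZMod.val i + 1) % l.length = ZMod.val (i + 1) := by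
      rw [hlen, ZMod.val_add, ZMod.val_one]
    simp only []
    rwa [getElem_congr_idx e] at h
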